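/- Fix N_u ≥ 1, ρ > 0, and α ∈ (0,1). For each n, let N_r(n) ≥ N_RF(n) ≥ N_u with N_RF(n) → ∞, let H_n ∈ ℂ^{N_r(n)×N_u} be any channel matrix, and let W_cv,n ∈ ℂ^{N_r(n)×N_RF(n)} be a conventional combiner for H_n (orthonormal columns whose first N_u columns are orthonormal eigenvectors of H_n H_n^H for its N_u largest eigenvalues). Then C(W_cv,n) / (N_u log₂ N_RF(n)) → 0 as n → ∞; i.e., the conventional combiner cannot achieve the optimal scaling law N_u log₂ N_RF. -/

import Mathlib

open Matrix BigOperators Filter Topology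

/-- The quantized mutual information `C(W)` for channel `H`, combiner `W`,
SNR `ρ` and quantization gain `α` (with `β = 1 - α`):
`C(W) = log₂ det( I + (α/β)·(diag{WᴴHHᴴW} + (1/(βρ))I)⁻¹ · WᴴHHᴴW )`. -/
noncomputable def MI (ρ α : ℝ) {Nr Nu NRF : ℕ} (H : Matrix (Fin Nr) (Fin Nu) ℂ)
    (W : Matrix (Fin Nr) (Fin NRF) ℂ) : ℝ :=
  let A : Matrix (Fin NRF) (Fin NRF) ℂ := Wᴴ * H * Hᴴ * W
  let M : Matrix (Fin NRF) (Fin NRF) ℂ :=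
    1 + ((α / (1 - α) : ℝ) : ℂ) •
      ((Matrix.diagonal A.diag + ((1 / ((1 - α) * ρ) : ℝ) : ℂ) • 1)⁻¹ * A)
  Real.logb 2 M.det.re

lemma MI_bounds (ρ α : ℝ) (hρ : 0 < ρ) (hα : α ∈ Set.Ioo (0 : ℝ) 1)
    {Nu Nr NRF : ℕ} (h1 : Nu ≤ NRF)
    (H : Matrix (Fin Nr) (Fin Nu) ℂ)
    (lam : Fin Nu → ℝ) (hnn : ∀ k, 0 ≤ lam k)
    (v : Fin Nu → Fin Nu → ℂ)
    (hv_on : ∀ k l, star (v k) ⬝ᵥ v l = if k = l then 1 else 0)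
    (hv_eig : ∀ k, (Hᴴ * H) *ᵥ v k = (lam k : ℂ) • v k)
    (u : Fin Nu → Fin Nr → ℂ)
    (hu_on : ∀ k l, star (u k) ⬝ᵥ u l = if k = l then 1 else 0)
    (hu_eig : ∀ k, (H * Hᴴ) *ᵥ u k = (lam k : ℂ) • u k)
    (W : Matrix (Fin Nr) (Fin NRF) ℂ) (hW : Wᴴ * W = 1)
    (hcols : ∀ (k : Fin Nu) (i : Fin Nr), W i (Fin.castLE h1 k) = u k i) :
    0 ≤ MI ρ α H W ∧ MI ρ α H W ≤ Nu * Real.logb 2 (1 - α)⁻¹ := by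
  obtain ⟨hα0, hα1⟩ := hα
  have hβ : (0:ℝ) < 1 - α := by linarith
  set U : Matrix (Fin Nr) (Fin Nu) ℂ := Matrix.of fun i k => u k i with hU
  set V : Matrix (Fin Nu) (Fin Nu) ℂ := Matrix.of fun i k => v k i with hV
  set D : Matrix (Fin Nu) (Fin Nu) ℂ := Matrix.diagonal fun k => (lam k : ℂ) with hD
  have hUU : Uᴴ * U = 1 := by
    ext k l
    simpa [hU, Matrix.mul_apply, Matrix.one_apply, dotProduct] using hu_on k l
  have hVV : Vᴴ * V = 1 := by
    ext k l
    simpa [hV, Matrix.mul_apply, Matrix.one_apply, dotProduct] using hv_on k l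
  have hHU : H * Hᴴ * U = U * D := by
    ext i k
    have h := congrFun (hu_eig k) i
    have lhs : (H * Hᴴ * U) i k = ((H * Hᴴ) *ᵥ u k) i := by
      simp only [Matrix.mul_apply, Matrix.mulVec, dotProduct, hU, Matrix.of_apply]
    rw [lhs, h, hD, Matrix.mul_diagonal, hU]
    simp [mul_comm]
  have hHV : Hᴴ * H * V = V * D := by
    ext i k
    have h := congrFun (hv_eig k) i
    have lhs : (Hᴴ * H * V) i k = ((Hᴴ * H) *ᵥ v k) i := by
      simp only [Matrix.mul_apply, Matrix.mulVec, dotProduct, hV, Matrix.of_apply]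
    rw [lhs, h, hD, Matrix.mul_diagonal, hV]
    simp [mul_comm]
  -- traces
  have hVV' : V * Vᴴ = 1 := mul_eq_one_comm.mp hVV
  have t1 : (Hᴴ * H).trace = D.trace := by
    calc (Hᴴ * H).trace = ((Hᴴ * H) * (V * Vᴴ)).trace := by rw [hVV', Matrix.mul_one]
      _ = ((Hᴴ * H * V) * Vᴴ).trace := by simp only [Matrix.mul_assoc]
      _ = ((V * D) * Vᴴ).trace := by rw [hHV]
      _ = (Vᴴ * (V * D)).trace := Matrix.trace_mul_comm _ _
      _ = ((Vᴴ * V) * D).trace := by simp only [Matrix.mul_assoc]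
      _ = D.trace := by rw [hVV, Matrix.one_mul]
  have t2 : (H * Hᴴ).trace = D.trace := by
    rw [Matrix.trace_mul_comm, t1]
  have tUD : (U * D * Uᴴ).trace = D.trace := by
    calc (U * D * Uᴴ).trace = (Uᴴ * (U * D)).trace := Matrix.trace_mul_comm _ _
      _ = ((Uᴴ * U) * D).trace := by simp only [Matrix.mul_assoc]
      _ = D.trace := by rw [hUU, Matrix.one_mul]
  set C : Matrix (Fin Nu) (Fin Nr) ℂ := Hᴴ * (1 - U * Uᴴ) with hCdef
  have tC : (Cᴴ * C).trace = 0 := by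
    have hCH : Cᴴ = (1 - U * Uᴴ) * H := by
      simp [hCdef, Matrix.conjTranspose_sub, Matrix.conjTranspose_mul, Matrix.sub_mul]
    have hCC : Cᴴ * C = (1 - U * Uᴴ) * (H * Hᴴ) * (1 - U * Uᴴ) := by
      rw [hCH, hCdef]
      simp only [Matrix.mul_assoc]
    have expand : Cᴴ * C = (H * Hᴴ) - (U * Uᴴ) * (H * Hᴴ) - (H * Hᴴ) * (U * Uᴴ)
        + (U * Uᴴ) * (H * Hᴴ) * (U * Uᴴ) := by
      rw [hCC]
      noncomm_ring
    have e1 : ((H * Hᴴ) * (U * Uᴴ)).trace = D.trace := by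
      have : (H * Hᴴ) * (U * Uᴴ) = (U * D) * Uᴴ := by
        rw [← Matrix.mul_assoc, hHU]
      rw [this]; exact tUD
    have e2 : ((U * Uᴴ) * (H * Hᴴ)).trace = D.trace := by
      rw [Matrix.trace_mul_comm]; exact e1
    have e3 : ((U * Uᴴ) * (H * Hᴴ) * (U * Uᴴ)).trace = D.trace := by
      have h' : (U * Uᴴ) * (H * Hᴴ) * (U * Uᴴ) = U * D * Uᴴ := by
        calc (U * Uᴴ) * (H * Hᴴ) * (U * Uᴴ)
            = (U * Uᴴ) * ((H * Hᴴ * U) * Uᴴ) := by simp only [Matrix.mul_assoc]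
          _ = (U * Uᴴ) * ((U * D) * Uᴴ) := by rw [hHU]
          _ = U * ((Uᴴ * U) * (D * Uᴴ)) := by simp only [Matrix.mul_assoc]
          _ = U * D * Uᴴ := by rw [hUU, Matrix.one_mul, Matrix.mul_assoc]
      rw [h']; exact tUD
    rw [expand, Matrix.trace_add, Matrix.trace_sub, Matrix.trace_sub, t2, e1, e2, e3]
    ring
  have hC0 : C = 0 := by
    have hsum : ∑ j, ∑ i, Complex.normSq (C i j) = 0 := by
      have h := congrArg Complex.re tC
      simp only [Matrix.trace, Matrix.diag, Matrix.mul_apply,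
        Matrix.conjTranspose_apply, Complex.zero_re] at h
      rw [← h]
      rw [Complex.re_sum]
      refine Finset.sum_congr rfl fun j _ => ?_
      rw [Complex.re_sum]
      refine Finset.sum_congr rfl fun i _ => ?_
      have : (starRingEnd ℂ) (C i j) * C i j = (Complex.normSq (C i j) : ℂ) := by
        rw [mul_comm, Complex.mul_conj]
      simp [this]
    have hz : ∀ j ∈ (Finset.univ : Finset (Fin Nr)), ∀ i ∈ (Finset.univ : Finset (Fin Nu)),
        Complex.normSq (C i j) = 0 := by
      have h1' := (Finset.sum_eq_zero_iff_of_nonneg (fun j _ =>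
        Finset.sum_nonneg fun i _ => Complex.normSq_nonneg _)).mp hsum
      intro j hj i hi
      exact (Finset.sum_eq_zero_iff_of_nonneg (fun i _ => Complex.normSq_nonneg _)).mp
        (h1' j hj) i hi
    ext i j
    exact Complex.normSq_eq_zero.mp (hz j (Finset.mem_univ _) i (Finset.mem_univ _))
  have hG : H * Hᴴ = U * D * Uᴴ := by
    have h' : Hᴴ = Hᴴ * (U * Uᴴ) := by
      have := hC0
      rw [hCdef, Matrix.mul_sub, Matrix.mul_one, sub_eq_zero] at this
      exact this
    calc H * Hᴴ = H * (Hᴴ * (U * Uᴴ)) := by rw [← h']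
      _ = (H * Hᴴ * U) * Uᴴ := by simp only [Matrix.mul_assoc]
      _ = (U * D) * Uᴴ := by rw [hHU]
  -- the matrix A is diagonal
  set lamR : Fin NRF → ℝ := fun j => if h : (j : ℕ) < Nu then lam ⟨j, h⟩ else 0 with hlamR
  have hlamRnn : ∀ j, 0 ≤ lamR j := by
    intro j; rw [hlamR]; dsimp only; split
    · exact hnn _
    · exact le_refl 0
  have hUW : Uᴴ * W = Matrix.of fun k j =>
      ((1 : Matrix (Fin NRF) (Fin NRF) ℂ) (Fin.castLE h1 k) j) := by
    ext k j
    have h := congrFun (congrFun hW (Fin.castLE h1 k)) j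
    simp only [Matrix.mul_apply, Matrix.conjTranspose_apply, Matrix.of_apply] at h ⊢
    rw [← h]
    refine Finset.sum_congr rfl fun i _ => ?_
    simp [hU, hcols k i]
  have hA : Wᴴ * H * Hᴴ * W = Matrix.diagonal fun j => (lamR j : ℂ) := by
    have h1' : Wᴴ * H * Hᴴ * W = (Uᴴ * W)ᴴ * D * (Uᴴ * W) := by
      calc Wᴴ * H * Hᴴ * W = Wᴴ * (H * Hᴴ) * W := by simp only [Matrix.mul_assoc]
        _ = Wᴴ * (U * D * Uᴴ) * W := by rw [hG]
        _ = (Wᴴ * U) * D * (Uᴴ * W) := by simp only [Matrix.mul_assoc]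
        _ = (Uᴴ * W)ᴴ * D * (Uᴴ * W) := by
            rw [Matrix.conjTranspose_mul, Matrix.conjTranspose_conjTranspose]
    rw [h1', hUW, hD]
    ext j j'
    simp only [Matrix.mul_apply, Matrix.conjTranspose_apply, Matrix.of_apply,
      Matrix.diagonal_apply, Matrix.one_apply, mul_ite, mul_zero,
      Finset.sum_ite_eq', Finset.mem_univ, if_true]
    by_cases hj : (j : ℕ) < Nu
    · have hk0 : Fin.castLE h1 ⟨(j:ℕ), hj⟩ = j := by ext; rfl
      rw [Finset.sum_eq_single (⟨(j:ℕ), hj⟩ : Fin Nu)]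
      · rw [hk0]
        simp only [if_pos rfl, star_one, one_mul]
        split_ifs with h <;> simp [hlamR, hj]
      · intro x _ hx
        have hne : ¬ (Fin.castLE h1 x = j) := by
          intro hcon
          have hval : (x : ℕ) = (j : ℕ) := by
            simpa using congrArg Fin.val hcon
          exact hx (Fin.ext hval)
        rw [if_neg hne]
        simp
      · intro hmem; exact absurd (Finset.mem_univ _) hmem
    · have hz : ∀ x ∈ (Finset.univ : Finset (Fin Nu)),
          (if Fin.castLE h1 x = j' then
            star (if Fin.castLE h1 x = j then (1:ℂ) else 0) * (lam x : ℂ) * 1 else 0) = 0 := by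
        intro x _
        have hne : ¬ (Fin.castLE h1 x = j) := by
          intro hcon
          apply hj
          rw [← hcon]
          exact x.isLt
        rw [if_neg hne]
        simp
      rw [Finset.sum_eq_zero hz]
      symm
      split_ifs with h <;> simp [hlamR, hj]
  -- parameters
  set e : ℝ := 1 / ((1 - α) * ρ) with he
  have he0 : 0 < e := by
    rw [he]; exact one_div_pos.mpr (mul_pos hβ hρ)
  set c : ℝ := α / (1 - α) with hc
  have hc0 : 0 ≤ c := le_of_lt (div_pos hα0 hβ)
  set μ : Fin NRF → ℝ := fun j => 1 + c * ((lamR j + e)⁻¹ * lamR j) with hμ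
  have hMI : MI ρ α H W = Real.logb 2 (∏ j, μ j) := by
    have hne : ∀ j, ((lamR j : ℂ) + ((e:ℝ):ℂ)) ≠ 0 := by
      intro j
      have h0 : (0:ℝ) < lamR j + e := add_pos_of_nonneg_of_pos (hlamRnn j) he0
      have : ((lamR j + e : ℝ) : ℂ) ≠ 0 := Complex.ofReal_ne_zero.mpr (ne_of_gt h0)
      rw [Complex.ofReal_add] at this
      exact this
    have hMdiag : (1 + ((α / (1 - α) : ℝ) : ℂ) •
        ((Matrix.diagonal (Wᴴ * H * Hᴴ * W).diag + ((1 / ((1 - α) * ρ) : ℝ) : ℂ) • 1)⁻¹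
          * (Wᴴ * H * Hᴴ * W)))
        = Matrix.diagonal fun j => ((μ j : ℝ) : ℂ) := by
      rw [hA, Matrix.diag_diagonal]
      have hsm : ((1 / ((1 - α) * ρ) : ℝ) : ℂ) • (1 : Matrix (Fin NRF) (Fin NRF) ℂ)
          = Matrix.diagonal fun _ : Fin NRF => ((e : ℝ) : ℂ) := by
        ext i k
        by_cases hik : i = k
        · subst hik
          rw [he]
          simp [Matrix.smul_apply, Matrix.one_apply_eq, Matrix.diagonal_apply_eq]
        · simp [Matrix.smul_apply, Matrix.one_apply_ne hik, Matrix.diagonal_apply_ne _ hik]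
      rw [hsm, Matrix.diagonal_add]
      have hinv : (Matrix.diagonal fun j => ((lamR j : ℂ) + ((e:ℝ):ℂ)))⁻¹
          = Matrix.diagonal fun j => ((lamR j : ℂ) + ((e:ℝ):ℂ))⁻¹ := by
        apply Matrix.inv_eq_left_inv
        rw [Matrix.diagonal_mul_diagonal]
        have hfun : (fun j => ((lamR j : ℂ) + ((e:ℝ):ℂ))⁻¹ * ((lamR j : ℂ) + ((e:ℝ):ℂ)))
            = fun _ : Fin NRF => (1:ℂ) := by
          funext j
          exact inv_mul_cancel₀ (hne j)
        rw [hfun, Matrix.diagonal_one]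
      rw [hinv, Matrix.diagonal_mul_diagonal]
      ext j j'
      by_cases hjj : j = j'
      · subst hjj
        simp only [Matrix.add_apply, Matrix.one_apply_eq, Matrix.smul_apply,
          Matrix.diagonal_apply_eq, smul_eq_mul, hμ]
        rw [hc, he]
        push_cast
        ring
      · simp [Matrix.add_apply, Matrix.one_apply_ne hjj, Matrix.diagonal_apply_ne _ hjj]
    have : MI ρ α H W = Real.logb 2
        (Matrix.det (Matrix.diagonal fun j => ((μ j : ℝ) : ℂ))).re := by
      rw [← hMdiag]; rfl
    rw [this, Matrix.det_diagonal, ← Complex.ofReal_prod, Complex.ofReal_re]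
  have hμ1 : ∀ j, 1 ≤ μ j := by
    intro j
    have h0 : (0:ℝ) < lamR j + e := add_pos_of_nonneg_of_pos (hlamRnn j) he0
    have : 0 ≤ c * ((lamR j + e)⁻¹ * lamR j) :=
      mul_nonneg hc0 (mul_nonneg (inv_nonneg.mpr (le_of_lt h0)) (hlamRnn j))
    rw [hμ]; dsimp only; linarith
  have hμle : ∀ j, μ j ≤ (1 - α)⁻¹ := by
    intro j
    have h0 : (0:ℝ) < lamR j + e := add_pos_of_nonneg_of_pos (hlamRnn j) he0
    have hratio : (lamR j + e)⁻¹ * lamR j ≤ 1 := by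
      rw [← div_eq_inv_mul]
      exact div_le_one_of_le₀ (by linarith) (le_of_lt h0)
    have h2 : c * ((lamR j + e)⁻¹ * lamR j) ≤ c := by
      calc c * ((lamR j + e)⁻¹ * lamR j) ≤ c * 1 := mul_le_mul_of_nonneg_left hratio hc0
        _ = c := mul_one c
    have h1c : 1 + c = (1 - α)⁻¹ := by rw [hc]; field_simp; ring
    rw [hμ]; dsimp only; linarith
  have hμtop : ∀ j : Fin NRF, ¬((j:ℕ) < Nu) → μ j = 1 := by
    intro j hj
    have : lamR j = 0 := by rw [hlamR]; simp [hj]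
    rw [hμ]; dsimp only; rw [this]; simp
  have hprod1 : (1:ℝ) ≤ ∏ j, μ j := by
    have h : ∏ _j : Fin NRF, (1:ℝ) ≤ ∏ j, μ j :=
      Finset.prod_le_prod (fun j _ => zero_le_one) (fun j _ => hμ1 j)
    simpa using h
  constructor
  · rw [hMI]
    exact Real.logb_nonneg one_lt_two hprod1
  · rw [hMI]
    have hcard : (Finset.univ.filter fun j : Fin NRF => (j:ℕ) < Nu).card = Nu := by
      have hset : (Finset.univ.filter fun j : Fin NRF => (j:ℕ) < Nu)
          = Finset.map ⟨Fin.castLE h1, Fin.castLE_injective h1⟩ Finset.univ := by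
        ext j
        simp only [Finset.mem_filter, Finset.mem_univ, true_and, Finset.mem_map,
          Function.Embedding.coeFn_mk]
        constructor
        · intro hj; exact ⟨⟨(j:ℕ), hj⟩, by ext; rfl⟩
        · rintro ⟨k, rfl⟩
          exact k.isLt
      rw [hset, Finset.card_map, Finset.card_univ, Fintype.card_fin]
    have hprodle : ∏ j, μ j ≤ (1 - α)⁻¹ ^ Nu := by
      have h1 : ∏ j, μ j ≤ ∏ j : Fin NRF, (if (j:ℕ) < Nu then (1-α)⁻¹ else 1) := by
        refine Finset.prod_le_prod (fun j _ => le_trans zero_le_one (hμ1 j)) ?_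
        intro j _
        by_cases hj : (j:ℕ) < Nu
        · rw [if_pos hj]; exact hμle j
        · rw [if_neg hj]; exact le_of_eq (hμtop j hj)
      have h2 : ∏ j : Fin NRF, (if (j:ℕ) < Nu then (1-α)⁻¹ else 1) = (1-α)⁻¹ ^ Nu := by
        rw [Finset.prod_ite, Finset.prod_const, Finset.prod_const, one_pow, mul_one, hcard]
      rw [← h2]; exact h1
    calc Real.logb 2 (∏ j, μ j) ≤ Real.logb 2 ((1 - α)⁻¹ ^ Nu) := by
          refine (Real.logb_le_logb one_lt_two ?_ ?_).mpr hprodle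
          · exact lt_of_lt_of_le zero_lt_one hprod1
          · positivity
      _ = Nu * Real.logb 2 (1 - α)⁻¹ := Real.logb_pow _ _ _

theorem stmt6 (ρ α : ℝ) (hρ : 0 < ρ) (hα : α ∈ Set.Ioo (0 : ℝ) 1)
    (Nu : ℕ) (hNu : 1 ≤ Nu)
    (Nr NRF : ℕ → ℕ) (h1 : ∀ n, Nu ≤ NRF n) (h2 : ∀ n, NRF n ≤ Nr n)
    (hNRF : Tendsto NRF atTop atTop)
    (H : ∀ n, Matrix (Fin (Nr n)) (Fin Nu) ℂ)
    -- for each n: the ordered eigenvalues λ₁(n) ≥ ⋯ ≥ λ_{Nu}(n) ≥ 0 of Hₙᴴ Hₙ,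
    -- witnessed by an orthonormal eigenbasis v n of Hₙᴴ Hₙ
    (lam : ∀ n, Fin Nu → ℝ) (hanti : ∀ n, Antitone (lam n)) (hnn : ∀ n k, 0 ≤ lam n k)
    (v : ∀ n, Fin Nu → Fin Nu → ℂ)
    (hv_on : ∀ n k l, star (v n k) ⬝ᵥ v n l = if k = l then 1 else 0)
    (hv_eig : ∀ n k, ((H n)ᴴ * H n) *ᵥ v n k = (lam n k : ℂ) • v n k)
    -- orthonormal vectors u n with Hₙ Hₙᴴ (u n k) = λ_k(n) (u n k)
    (u : ∀ n, Fin Nu → Fin (Nr n) → ℂ)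
    (hu_on : ∀ n k l, star (u n k) ⬝ᵥ u n l = if k = l then 1 else 0)
    (hu_eig : ∀ n k, (H n * (H n)ᴴ) *ᵥ u n k = (lam n k : ℂ) • u n k)
    -- the conventional combiners: orthonormal columns, the first Nu of which
    -- are the eigenvectors of Hₙ Hₙᴴ for its Nu largest eigenvalues
    (Wcv : ∀ n, Matrix (Fin (Nr n)) (Fin (NRF n)) ℂ)
    (hWcv : ∀ n, (Wcv n)ᴴ * Wcv n = 1)
    (hcols : ∀ n (k : Fin Nu) (i : Fin (Nr n)), Wcv n i (Fin.castLE (h1 n) k) = u n k i) :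
    Tendsto (fun n => MI ρ α (H n) (Wcv n) / (Nu * Real.logb 2 (NRF n)))
      atTop (nhds 0) := by
  have hbounds : ∀ n, 0 ≤ MI ρ α (H n) (Wcv n) ∧
      MI ρ α (H n) (Wcv n) ≤ Nu * Real.logb 2 (1 - α)⁻¹ := fun n =>
    MI_bounds ρ α hρ hα (h1 n) (H n) (lam n) (hnn n) (v n) (hv_on n) (hv_eig n)
      (u n) (hu_on n) (hu_eig n) (Wcv n) (hWcv n) (hcols n)
  have hDen : Tendsto (fun n => (Nu:ℝ) * Real.logb 2 (NRF n)) atTop atTop := by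
    have h2' : Tendsto (fun n => ((NRF n : ℕ) : ℝ)) atTop atTop :=
      tendsto_natCast_atTop_atTop.comp hNRF
    have hlog : Tendsto (fun n => Real.logb 2 (NRF n)) atTop atTop :=
      (Real.tendsto_logb_atTop one_lt_two).comp h2'
    have hNu0 : (0:ℝ) < Nu := by exact_mod_cast hNu
    exact hlog.const_mul_atTop hNu0
  have hupper : Tendsto (fun n => ((Nu:ℝ) * Real.logb 2 (1 - α)⁻¹)
      / ((Nu:ℝ) * Real.logb 2 (NRF n))) atTop (nhds 0) :=
    tendsto_const_nhds.div_atTop hDen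
  have hev : ∀ᶠ n in atTop, 0 < (Nu:ℝ) * Real.logb 2 (NRF n) :=
    hDen.eventually_gt_atTop 0
  refine tendsto_of_tendsto_of_tendsto_of_le_of_le' tendsto_const_nhds hupper ?_ ?_
  · filter_upwards [hev] with n hn
    exact div_nonneg (hbounds n).1 (le_of_lt hn)
  · filter_upwards [hev] with n hn
    exact (div_le_div_iff_of_pos_right hn).mpr (hbounds n).2
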